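/- Let m, n be coprime positive integers, D an (m,n)-Dyck path, and D̄ its rank complement. Then α(D̄) is the conjugate partition of α(D), where α is Anderson's bijection from (m,n)-Dyck paths to (m,n)-cores. -/

import Mathlib

open Nat

/-- Number of north steps among the first `i` steps of the path `P`
(`true` = north step `N`, `false` = east step `E`). -/
def nSteps (P : List Bool) (i : ℕ) : ℕ := (P.take i).count true

/-- Number of east steps among the first `i` steps. -/
def eSteps (P : List Bool) (i : ℕ) : ℕ := (P.take i).count false

/-- Rank `m*b - n*a` of the `i`-th lattice point `(a,b)` of the path. -/
def rank (m n : ℕ) (P : List Bool) (i : ℕ) : ℤ :=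
  (m : ℤ) * nSteps P i - (n : ℤ) * eSteps P i

/-- A lattice path from `(0,0)` to `(m,n)`: `m+n` unit steps, `n` of them north. -/
def IsPath (m n : ℕ) (P : List Bool) : Prop :=
  P.length = m + n ∧ P.count true = n

/-- An `(m,n)`-Dyck path: a path staying weakly above the diagonal,
equivalently with all ranks nonnegative. -/
def IsDyck (m n : ℕ) (P : List Bool) : Prop :=
  IsPath m n P ∧ ∀ i ≤ m + n, 0 ≤ rank m n P i

/-- The set of ranks of the first `m+n` lattice points of the path. -/
def rankSet (m n : ℕ) (P : List Bool) : Finset ℤ :=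
  (Finset.range (m + n)).image (rank m n P)

/-- Ranks of south ends (starting points of north steps). -/
def southRanks (m n : ℕ) (P : List Bool) : Finset ℤ :=
  ((Finset.range (m + n)).filter (fun i => P.getD i false = true)).image (rank m n P)

/-- Ranks of west ends (starting points of east steps). -/
def westRanks (m n : ℕ) (P : List Bool) : Finset ℤ :=
  ((Finset.range (m + n)).filter (fun i => P.getD i true = false)).image (rank m n P)

/-- Transpose of a path: reverse the word and exchange `N` and `E`. -/
def transpose (P : List Bool) : List Bool := (P.map (fun b => !b)).reverse

/-- `D'` is the rank complement of `D`: its rank set is `M - r(D)`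
where `M` is the maximum rank of `D`. -/
def IsRankComplement (m n : ℕ) (D D' : List Bool) : Prop :=
  ∃ M : ℤ, IsGreatest (↑(rankSet m n D) : Set ℤ) M ∧
    rankSet m n D' = (rankSet m n D).image (fun r => M - r)

/-- A partition, encoded as a weakly decreasing list of positive integers. -/
def IsPartition (L : List ℕ) : Prop :=
  L.Pairwise (· ≥ ·) ∧ ∀ x ∈ L, 0 < x

/-- Hook length of the cell in (0-based) row `i`, column `j`. -/
def hook (L : List ℕ) (i j : ℕ) : ℕ :=
  L.getD i 0 - j + (L.drop (i + 1)).countP (fun x => decide (j < x))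

/-- `L` is an `n`-core: no hook length is divisible by `n`. -/
def IsCore (n : ℕ) (L : List ℕ) : Prop :=
  ∀ i < L.length, ∀ j < L.getD i 0, ¬ (n ∣ hook L i j)

/-- The set of first-column hook lengths of `L`. -/
def firstColHooks (L : List ℕ) : Finset ℕ :=
  (Finset.range L.length).image (fun i => hook L i 0)

/-- Conjugate (transpose) partition. -/
def conjugate (L : List ℕ) : List ℕ :=
  (List.range (L.getD 0 0)).map (fun j => L.countP (fun x => decide (j < x)))

/-- `H` is `n`-flush: no element is a multiple of `n`, and it is closed
under subtracting `n` while staying positive. -/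
def IsFlush (n : ℕ) (H : Finset ℕ) : Prop :=
  (∀ h ∈ H, ¬ (n ∣ h)) ∧ ∀ h ∈ H, n < h → h - n ∈ H

/-- `s_i^n(H)`: the maximum of `((n+H) ∪ {i}) ∩ (i + nℤ)`. -/
def sFun (n : ℕ) (H : Finset ℕ) (i : ℕ) : ℕ :=
  (insert i ((H.filter (fun h => h % n = i % n)).image (fun h => h + n))).max'
    (Finset.insert_nonempty _ _)

/-- `S^n(H) = {s_0, ..., s_{n-1}}`. -/
def sSet (n : ℕ) (H : Finset ℕ) : Finset ℕ := (Finset.range n).image (sFun n H)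

/-- The lattice point `(a,b)` lies strictly to the right of the path `D`
inside the `m × n` rectangle: every lattice point of `D` at height `b`
has `x`-coordinate less than `a`. -/
def StrictlyRightOf (m n : ℕ) (D : List Bool) (a b : ℕ) : Prop :=
  a ≤ m ∧ b ≤ n ∧ ∀ i ≤ m + n, (D.take i).count true = b → (D.take i).count false < a

/-- The positive ranks of lattice points lying strictly to the right of `D`. -/
def andersonSet (m n : ℕ) (D : List Bool) : Set ℕ :=
  {h | 0 < h ∧ ∃ a b : ℕ, StrictlyRightOf m n D a b ∧ (h : ℤ) = (m : ℤ) * b - (n : ℤ) * a}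

/-- The `x`-coordinate of the vertical step of `D` at height `y`
(the number of east steps taken at heights `≤ y`). -/
def southX (D : List Bool) (y : ℕ) : ℕ :=
  (List.range D.length).countP
    (fun i => decide (D.getD i true = false ∧ (D.take i).count true ≤ y))

/-- The partition formed by the cells above the path `D`
inside a rectangle of height `n`. -/
def pathPartition (n : ℕ) (D : List Bool) : List ℕ :=
  (((List.range n).reverse).map (fun y => southX D y)).filter (fun x => decide (0 < x))

/-- Arm of the cell `(i,j)` of `L`. -/
def armL (L : List ℕ) (i j : ℕ) : ℕ := L.getD i 0 - (j + 1)

/-- Leg of the cell `(i,j)` of `L`. -/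
def legL (L : List ℕ) (i j : ℕ) : ℕ := (L.drop (i + 1)).countP (fun x => decide (j < x))

/-- The dinv statistic of an `(m,n)`-Dyck path: the number of cells `c` of the
partition above the path with `arm(c)/(leg(c)+1) ≤ m/n < (arm(c)+1)/leg(c)`. -/
def dinv (m n : ℕ) (D : List Bool) : ℕ :=
  ((Finset.range (pathPartition n D).length ×ˢ Finset.range m).filter
    (fun p => p.2 < (pathPartition n D).getD p.1 0 ∧
      armL (pathPartition n D) p.1 p.2 * n ≤ m * (legL (pathPartition n D) p.1 p.2 + 1) ∧
      m * legL (pathPartition n D) p.1 p.2 < n * (armL (pathPartition n D) p.1 p.2 + 1))).card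

/-- `codinv(D) = #{(r_s, r_w) : r_s ∈ S(D), r_w ∈ W(D), r_s < r_w}`. -/
def codinv (m n : ℕ) (D : List Bool) : ℕ :=
  ((southRanks m n D ×ˢ westRanks m n D).filter (fun p => p.1 < p.2)).card

/-- The skew length of an `(m,n)`-core: the number of cells lying both in an
`n`-row (a row `i` with `h_i + n ∈ S^n(H_λ)`) and in the `m`-boundary
(hook length `< m`). -/
def skewLength (m n : ℕ) (L : List ℕ) : ℕ :=
  ((Finset.range L.length ×ˢ Finset.range (L.headD 0)).filter
    (fun p => p.2 < L.getD p.1 0 ∧ hook L p.1 p.2 < m ∧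
      hook L p.1 0 + n ∈ sSet n (firstColHooks L))).card
section PathAux

variable {m n : ℕ} {D : List Bool}

lemma count_tf (l : List Bool) : l.count true + l.count false = l.length := by
  induction l with
  | nil => simp
  | cons a l ih => cases a <;> simp [List.count_cons] <;> omega

lemma nSteps_zero : nSteps D 0 = 0 := rfl
lemma eSteps_zero : eSteps D 0 = 0 := rfl

lemma nSteps_succ_true {i : ℕ} (h : i < D.length) (ht : D.getD i false = true) :
    nSteps D (i + 1) = nSteps D i + 1 ∧ eSteps D (i + 1) = eSteps D i := by
  rw [List.getD_eq_getElem _ _ h] at ht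
  have h1 : D[i]? = some true := by rw [List.getElem?_eq_getElem h, ht]
  unfold nSteps eSteps
  rw [List.take_succ, h1]
  simp [List.count_append]

lemma nSteps_succ_false {i : ℕ} (h : i < D.length) (ht : D.getD i false = false) :
    nSteps D (i + 1) = nSteps D i ∧ eSteps D (i + 1) = eSteps D i + 1 := by
  rw [List.getD_eq_getElem _ _ h] at ht
  have h1 : D[i]? = some false := by rw [List.getElem?_eq_getElem h, ht]
  unfold nSteps eSteps
  rw [List.take_succ, h1]
  simp [List.count_append]

lemma nSteps_mono {i j : ℕ} (hij : i ≤ j) : nSteps D i ≤ nSteps D j := by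
  have : D.take i = (D.take j).take i := by rw [List.take_take, Nat.min_eq_left hij]
  rw [nSteps, nSteps, this]
  exact (List.take_sublist _ _).count_le _

lemma eSteps_mono {i j : ℕ} (hij : i ≤ j) : eSteps D i ≤ eSteps D j := by
  have : D.take i = (D.take j).take i := by rw [List.take_take, Nat.min_eq_left hij]
  rw [eSteps, eSteps, this]
  exact (List.take_sublist _ _).count_le _

lemma nSteps_le_n (hP : IsPath m n D) (i : ℕ) : nSteps D i ≤ n := by
  rw [nSteps, ← hP.2]
  exact (List.take_sublist _ _).count_le _

lemma steps_sum (hP : IsPath m n D) {i : ℕ} (hi : i ≤ m + n) :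
    nSteps D i + eSteps D i = i := by
  rw [nSteps, eSteps, count_tf, List.length_take, hP.1, Nat.min_eq_left hi]

lemma nSteps_full (hP : IsPath m n D) : nSteps D (m + n) = n := by
  rw [nSteps, List.take_of_length_le (le_of_eq hP.1), hP.2]

lemma eSteps_full (hP : IsPath m n D) : eSteps D (m + n) = m := by
  have := steps_sum hP (le_refl (m + n))
  rw [nSteps_full hP] at this; omega

lemma rank_zero : rank m n D 0 = 0 := by simp [rank, nSteps, eSteps]

lemma rank_full (hP : IsPath m n D) : rank m n D (m + n) = 0 := by
  rw [rank, nSteps_full hP, eSteps_full hP]; ring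

lemma rank_succ_true {i : ℕ} (h : i < D.length) (ht : D.getD i false = true) :
    rank m n D (i + 1) = rank m n D i + m := by
  obtain ⟨h1, h2⟩ := nSteps_succ_true h ht
  rw [rank, rank, h1, h2]; push_cast; ring

lemma rank_succ_false {i : ℕ} (h : i < D.length) (ht : D.getD i false = false) :
    rank m n D (i + 1) = rank m n D i - n := by
  obtain ⟨h1, h2⟩ := nSteps_succ_false h ht
  rw [rank, rank, h1, h2]; push_cast; ring

/-- From `m*B = n*A` with `m,n` coprime, extract the common factor. -/
lemma exists_k (hco : Nat.Coprime m n) (hn : 0 < n) {A B : ℤ}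
    (h : (m : ℤ) * B = (n : ℤ) * A) : ∃ k : ℤ, B = n * k ∧ A = m * k := by
  have hcop : IsCoprime (n : ℤ) (m : ℤ) := (Nat.isCoprime_iff_coprime.mpr hco.symm)
  have hdvd : (n : ℤ) ∣ B := hcop.dvd_of_dvd_mul_left ⟨A, h⟩
  obtain ⟨k, hk⟩ := hdvd
  refine ⟨k, hk, ?_⟩
  have hn' : (n : ℤ) ≠ 0 := by exact_mod_cast hn.ne'
  have : (n : ℤ) * A = (n : ℤ) * ((m : ℤ) * k) := by rw [← h, hk]; ring
  exact mul_left_cancel₀ hn' this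

end PathAux
section SouthAux

variable {m n : ℕ} {D : List Bool}

lemma mem_rankSet_iff {r : ℤ} :
    r ∈ rankSet m n D ↔ ∃ i < m + n, rank m n D i = r := by
  simp [rankSet, Finset.mem_image, Finset.mem_range]

lemma mem_southRanks_iff {r : ℤ} :
    r ∈ southRanks m n D ↔
      ∃ i < m + n, D.getD i false = true ∧ rank m n D i = r := by
  simp only [southRanks, Finset.mem_image, Finset.mem_filter, Finset.mem_range]
  constructor
  · rintro ⟨i, ⟨hi, ht⟩, hr⟩; exact ⟨i, hi, ht, hr⟩
  · rintro ⟨i, hi, ht, hr⟩; exact ⟨i, ⟨hi, ht⟩, hr⟩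

lemma rank_nonneg (hD : IsDyck m n D) {i : ℕ} (hi : i ≤ m + n) :
    0 ≤ rank m n D i := hD.2 i hi

lemma rankSet_nonneg (hD : IsDyck m n D) {r : ℤ} (hr : r ∈ rankSet m n D) : 0 ≤ r := by
  obtain ⟨i, hi, hrank⟩ := mem_rankSet_iff.mp hr
  rw [← hrank]; exact rank_nonneg hD hi.le

lemma zero_mem_rankSet (hm : 0 < m) (hn : 0 < n) : (0 : ℤ) ∈ rankSet m n D := by
  exact mem_rankSet_iff.mpr ⟨0, by omega, rank_zero⟩

/-- The first step of a Dyck path is north, hence `m` is a rank. -/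
lemma first_step (hm : 0 < m) (hn : 0 < n) (hD : IsDyck m n D) :
    D.getD 0 false = true ∧ rank m n D 1 = m := by
  have hlen : 0 < D.length := by rw [hD.1.1]; omega
  have ht : D.getD 0 false = true := by
    by_contra hf
    have hf' : D.getD 0 false = false := by simpa using hf
    have := rank_succ_false (m := m) (n := n) hlen hf'
    rw [rank_zero] at this
    have h0 := rank_nonneg hD (i := 1) (by omega)
    rw [this] at h0; omega
  refine ⟨ht, ?_⟩
  rw [rank_succ_true hlen ht, rank_zero]; ring

lemma m_mem_rankSet (hm : 0 < m) (hn : 0 < n) (hD : IsDyck m n D) :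
    (m : ℤ) ∈ rankSet m n D := by
  refine mem_rankSet_iff.mpr ⟨1, by omega, (first_step hm hn hD).2⟩

/-- Characterization: a rank is a south rank iff both `r` and `r+m` are ranks. -/
lemma south_char (hm : 0 < m) (hn : 0 < n) (hco : Nat.Coprime m n) (hD : IsDyck m n D)
    {r : ℤ} : r ∈ southRanks m n D ↔ r ∈ rankSet m n D ∧ r + m ∈ rankSet m n D := by
  have hlen := hD.1.1
  constructor
  · rintro hr
    obtain ⟨i, hi, ht, hrank⟩ := mem_southRanks_iff.mp hr
    have hstep := rank_succ_true (m := m) (n := n) (by omega) ht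
    rw [hrank] at hstep
    have hi1 : i + 1 < m + n := by
      rcases Nat.lt_or_ge (i+1) (m+n) with h | h
      · exact h
      · exfalso
        have : i + 1 = m + n := by omega
        rw [this, rank_full hD.1] at hstep
        have h0 : (0:ℤ) ≤ r := by rw [← hrank]; exact rank_nonneg hD hi.le
        omega
    exact ⟨mem_rankSet_iff.mpr ⟨i, hi, hrank⟩, mem_rankSet_iff.mpr ⟨i+1, hi1, hstep⟩⟩
  · rintro ⟨hr, hrm⟩
    obtain ⟨i, hi, hri⟩ := mem_rankSet_iff.mp hr
    obtain ⟨j, hj, hrj⟩ := mem_rankSet_iff.mp hrm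
    refine mem_southRanks_iff.mpr ⟨i, hi, ?_, hri⟩
    by_contra hf
    have hf' : D.getD i false = false := by simpa using hf
    have hstep := rank_succ_false (m := m) (n := n) (by omega) hf'
    rw [hri] at hstep
    -- rank j = r + m : derive j = i + 1 + (m+n)k
    have heq : (m:ℤ) * ((nSteps D j : ℤ) - nSteps D i - 1)
        = (n:ℤ) * ((eSteps D j : ℤ) - eSteps D i) := by
      have e1 : rank m n D j = rank m n D i + m := by rw [hri, hrj]
      rw [rank, rank] at e1; ring_nf at e1 ⊢; linarith
    obtain ⟨k, hk1, hk2⟩ := exists_k hco hn heq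
    have hsumi := steps_sum hD.1 (i := i) (by omega)
    have hsumj := steps_sum hD.1 (i := j) (by omega)
    have hjeq : (j:ℤ) = i + 1 + (m + n) * k := by
      have : (j:ℤ) = (nSteps D j : ℤ) + eSteps D j := by exact_mod_cast hsumj.symm
      have hii : (i:ℤ) = (nSteps D i : ℤ) + eSteps D i := by exact_mod_cast hsumi.symm
      rw [this, hii]; push_cast; linarith
    have hmn : (0:ℤ) < (m:ℤ) + n := by positivity
    have hk0 : k = 0 ∨ k = -1 := by
      rcases lt_trichotomy k 0 with h | h | h
      · right
        by_contra hne
        have : k ≤ -2 := by omega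
        have : (j:ℤ) ≤ (i:ℤ) + 1 - 2 * ((m:ℤ)+n) := by
          rw [hjeq]; nlinarith
        have hj0 : (0:ℤ) ≤ j := by positivity
        have : (i:ℤ) < m + n := by exact_mod_cast hi
        omega
      · left; exact h
      · exfalso
        have : (1:ℤ) ≤ k := by omega
        have : (i:ℤ) + 1 + (m+n) ≤ j := by rw [hjeq]; nlinarith
        have : (j:ℤ) < m + n := by exact_mod_cast hj
        omega
    rcases hk0 with hk | hk
    · rw [hk] at hjeq
      have : j = i + 1 := by omega
      rw [this, hstep] at hrj
      have : (m:ℤ) + n = 0 := by linarith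
      omega
    · rw [hk] at hjeq
      have hij : (i:ℤ) + 1 = j + (m + n) := by linarith
      have : (j:ℤ) < m + n := by exact_mod_cast hj
      have hj0 : j = 0 := by omega
      have : i + 1 = m + n := by omega
      rw [hj0, rank_zero] at hrj
      have h0 : (0:ℤ) ≤ r := rankSet_nonneg hD hr
      omega

lemma zero_mem_southRanks (hm : 0 < m) (hn : 0 < n) (hco : Nat.Coprime m n)
    (hD : IsDyck m n D) : (0 : ℤ) ∈ southRanks m n D := by
  rw [south_char hm hn hco hD]
  exact ⟨zero_mem_rankSet hm hn, by simpa using m_mem_rankSet hm hn hD⟩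

end SouthAux
section HeightAux

variable {m n : ℕ} {D : List Bool}

lemma nSteps_succ_le (hP : IsPath m n D) (i : ℕ) : nSteps D (i + 1) ≤ nSteps D i + 1 := by
  rcases Nat.lt_or_ge i D.length with h | h
  · rcases Bool.eq_false_or_eq_true (D.getD i false) with ht | hf
    · rw [(nSteps_succ_true h ht).1]
    · rw [(nSteps_succ_false h hf).1]; omega
  · have : D.take (i+1) = D.take i := by
      rw [List.take_of_length_le h, List.take_of_length_le (by omega)]
    rw [nSteps, this]; exact Nat.le_succ _

/-- For every `b < n`, there is a (unique maximal) index at height `b` starting a north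
step, and every point of the path at height `b` lies weakly to its left. -/
lemma south_at_height (hm : 0 < m) (hn : 0 < n) (hD : IsDyck m n D) {b : ℕ} (hb : b < n) :
    ∃ i < m + n, D.getD i false = true ∧ nSteps D i = b ∧
      ∀ i' ≤ m + n, nSteps D i' = b → eSteps D i' ≤ eSteps D i := by
  have hfull := nSteps_full hD.1
  -- existence of an index at height b
  have hex : ∃ i, i ≤ m + n ∧ nSteps D i = b := by
    have hP : ∃ i, b ≤ nSteps D i := ⟨m + n, by omega⟩
    classical
    let i0 := Nat.find hP
    have hi0 : b ≤ nSteps D i0 := Nat.find_spec hP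
    have hle : i0 ≤ m + n := Nat.find_le (by omega)
    rcases Nat.eq_zero_or_pos i0 with h0 | hpos
    · refine ⟨0, by omega, ?_⟩
      have : nSteps D 0 = 0 := nSteps_zero
      rw [h0] at hi0; omega
    · have hlt := Nat.find_min hP (m := i0 - 1) (by omega)
      push_neg at hlt
      have hstep : nSteps D (i0 - 1 + 1) ≤ nSteps D (i0 - 1) + 1 := nSteps_succ_le hD.1 _
      have : i0 - 1 + 1 = i0 := by omega
      rw [this] at hstep
      exact ⟨i0, hle, by omega⟩
  classical
  -- maximal such index
  obtain ⟨T, hT⟩ : ∃ T : Finset ℕ, T = (Finset.range (m+n+1)).filter (fun i => nSteps D i = b) :=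
    ⟨_, rfl⟩
  have hTne : T.Nonempty := by
    obtain ⟨i, hi1, hi2⟩ := hex
    exact ⟨i, by simp [hT, Finset.mem_filter, Finset.mem_range]; omega⟩
  set i := T.max' hTne with hidef
  have hiT : i ∈ T := T.max'_mem hTne
  have hi1 : i ≤ m + n ∧ nSteps D i = b := by
    simpa [hT, Finset.mem_filter, Finset.mem_range, Nat.lt_succ_iff] using hiT
  have hilt : i < m + n := by
    rcases Nat.lt_or_ge i (m+n) with h | h
    · exact h
    · exfalso; have : i = m + n := by omega
      rw [this, hfull] at hi1; omega
  have ht : D.getD i false = true := by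
    by_contra hf
    have hf' : D.getD i false = false := by simpa using hf
    have hstep := (nSteps_succ_false (by rw [hD.1.1]; omega) hf').1
    have : i + 1 ∈ T := by
      simp only [hT, Finset.mem_filter, Finset.mem_range, Nat.lt_succ_iff]
      exact ⟨by omega, by rw [hstep]; exact hi1.2⟩
    have := T.le_max' _ this
    omega
  refine ⟨i, hilt, ht, hi1.2, ?_⟩
  intro i' hi' hb'
  have : i' ∈ T := by
    simp only [hT, Finset.mem_filter, Finset.mem_range, Nat.lt_succ_iff]
    exact ⟨hi', hb'⟩
  exact eSteps_mono (T.le_max' _ this)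

/-- The height of a south end is `< n`. -/
lemma south_height_lt {i : ℕ} (hP : IsPath m n D) (hi : i < m + n)
    (ht : D.getD i false = true) : nSteps D i < n := by
  have := (nSteps_succ_true (by rw [hP.1]; omega) ht).1
  have h2 := nSteps_le_n hP (i + 1)
  omega

/-- A south rank is congruent to `m * (its height)` mod `n`, and determines the height. -/
lemma south_unique (hm : 0 < m) (hn : 0 < n) (hco : Nat.Coprime m n) (hD : IsDyck m n D)
    {s₁ s₂ : ℤ} (h1 : s₁ ∈ southRanks m n D) (h2 : s₂ ∈ southRanks m n D)
    (hdvd : (n : ℤ) ∣ s₁ - s₂) : s₁ = s₂ := by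
  obtain ⟨i, hi, hti, hri⟩ := mem_southRanks_iff.mp h1
  obtain ⟨j, hj, htj, hrj⟩ := mem_southRanks_iff.mp h2
  have hbi := south_height_lt hD.1 hi hti
  have hbj := south_height_lt hD.1 hj htj
  -- n ∣ m * (b_i - b_j)
  have hd2 : (n:ℤ) ∣ (m:ℤ) * ((nSteps D i : ℤ) - nSteps D j) := by
    obtain ⟨k, hk⟩ := hdvd
    refine ⟨k + ((eSteps D i : ℤ) - eSteps D j), ?_⟩
    have : s₁ - s₂ = (m:ℤ) * ((nSteps D i : ℤ) - nSteps D j)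
        - (n:ℤ) * ((eSteps D i : ℤ) - eSteps D j) := by
      rw [← hri, ← hrj, rank, rank]; ring
    rw [this] at hk; linarith
  have hcop : IsCoprime (n : ℤ) (m : ℤ) := (Nat.isCoprime_iff_coprime.mpr hco.symm)
  have hd3 : (n:ℤ) ∣ ((nSteps D i : ℤ) - nSteps D j) := hcop.dvd_of_dvd_mul_left hd2
  have hbeq : nSteps D i = nSteps D j := by
    obtain ⟨k, hk⟩ := hd3
    have h1' : (nSteps D i : ℤ) < n := by exact_mod_cast hbi
    have h2' : (nSteps D j : ℤ) < n := by exact_mod_cast hbj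
    have h3' : (0:ℤ) ≤ (nSteps D i : ℤ) := by positivity
    have h4' : (0:ℤ) ≤ (nSteps D j : ℤ) := by positivity
    have hk0 : k = 0 := by nlinarith
    rw [hk0] at hk; omega
  -- same height forces same index
  have hij : i = j := by
    by_contra hne
    rcases Nat.lt_or_ge i j with h | h
    · have := (nSteps_succ_true (by rw [hD.1.1]; omega) hti).1
      have hmono := nSteps_mono (D := D) (i := i + 1) (j := j) (by omega)
      omega
    · have hji : j < i := by omega
      have := (nSteps_succ_true (by rw [hD.1.1]; omega) htj).1
      have hmono := nSteps_mono (D := D) (i := j + 1) (j := i) (by omega)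
      omega
  rw [← hri, ← hrj, hij]

/-- Every residue class mod `n` contains a south rank. -/
lemma south_exists_mod (hm : 0 < m) (hn : 0 < n) (hco : Nat.Coprime m n)
    (hD : IsDyck m n D) (c : ℤ) : ∃ s ∈ southRanks m n D, (n : ℤ) ∣ s - c := by
  haveI : NeZero n := ⟨hn.ne'⟩
  classical
  set u := ZMod.unitOfCoprime m hco
  set b : ℕ := (((u⁻¹ : (ZMod n)ˣ) : ZMod n) * (c : ZMod n)).val with hbdef
  have hblt : b < n := ZMod.val_lt _
  obtain ⟨i, hi, ht, hbi, -⟩ := south_at_height hm hn hD hblt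
  refine ⟨rank m n D i, mem_southRanks_iff.mpr ⟨i, hi, ht, rfl⟩, ?_⟩
  have hcast : ((rank m n D i - c : ℤ) : ZMod n) = 0 := by
    have hb : ((b : ℕ) : ZMod n) = ((u⁻¹ : (ZMod n)ˣ) : ZMod n) * (c : ZMod n) := by
      rw [hbdef, ZMod.natCast_val, ZMod.cast_id]
    have hu : ((u : (ZMod n)ˣ) : ZMod n) = (m : ZMod n) := ZMod.coe_unitOfCoprime m hco
    have : ((rank m n D i : ℤ) : ZMod n) = (c : ZMod n) := by
      rw [rank, hbi]
      push_cast
      rw [hb, ← hu]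
      rw [ZMod.natCast_self]
      rw [zero_mul, sub_zero, ← mul_assoc]
      rw [Units.mul_inv, one_mul]
    push_cast
    rw [this]; ring
  exact (ZMod.intCast_zmod_eq_zero_iff_dvd _ n).mp hcast

end HeightAux
section AndersonAux

variable {m n : ℕ} {D : List Bool}

lemma anderson_char (hm : 0 < m) (hn : 0 < n) (hco : Nat.Coprime m n)
    (hD : IsDyck m n D) (h : ℕ) :
    h ∈ andersonSet m n D ↔
      0 < h ∧ ∃ s ∈ southRanks m n D, (n : ℤ) ∣ s - h ∧ (h : ℤ) < s := by
  constructor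
  · rintro ⟨hpos, a, b, ⟨ham, hbn, hsro⟩, heq⟩
    refine ⟨hpos, ?_⟩
    have hblt : b < n := by
      rcases Nat.lt_or_ge b n with hb | hb
      · exact hb
      · exfalso
        have hb' : b = n := by omega
        have := hsro (m + n) (le_refl _)
          (by show nSteps D (m+n) = b; rw [nSteps_full hD.1, hb'])
        have he : eSteps D (m + n) = m := eSteps_full hD.1
        rw [show (D.take (m+n)).count false = eSteps D (m+n) from rfl, he] at this
        omega
    obtain ⟨i, hi, ht, hbi, hmax⟩ := south_at_height hm hn hD hblt
    refine ⟨rank m n D i, mem_southRanks_iff.mpr ⟨i, hi, ht, rfl⟩, ?_, ?_⟩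
    · have hlt : eSteps D i < a := by
        have := hsro i hi.le (by rw [show (D.take i).count true = nSteps D i from rfl, hbi])
        exact this
      refine ⟨(a : ℤ) - eSteps D i, ?_⟩
      rw [rank, hbi, heq]; ring
    · have hlt : eSteps D i < a := hsro i hi.le (by rw [show (D.take i).count true = nSteps D i from rfl, hbi])
      have : ((eSteps D i : ℤ)) < a := by exact_mod_cast hlt
      rw [rank, hbi, heq]
      have hn' : (0:ℤ) < n := by exact_mod_cast hn
      nlinarith
  · rintro ⟨hpos, s, hs, hdvd, hlt⟩
    obtain ⟨i, hi, ht, hri⟩ := mem_southRanks_iff.mp hs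
    have hblt : nSteps D i < n := south_height_lt hD.1 hi ht
    obtain ⟨k, hk⟩ := hdvd
    have hn' : (0:ℤ) < n := by exact_mod_cast hn
    have hk1 : 1 ≤ k := by nlinarith [hlt, hk]
    refine ⟨hpos, eSteps D i + k.toNat, nSteps D i, ⟨?_, ?_, ?_⟩, ?_⟩
    · -- a ≤ m
      have hkeq : ((eSteps D i + k.toNat : ℕ) : ℤ) = (eSteps D i : ℤ) + k := by
        push_cast [Int.toNat_of_nonneg (by omega : (0:ℤ) ≤ k)]; ring
      have hhe : (h : ℤ) = (m:ℤ) * nSteps D i - (n:ℤ) * ((eSteps D i : ℤ) + k) := by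
        rw [← hri, rank] at hk
        linarith
      have hb' : (nSteps D i : ℤ) < n := by exact_mod_cast hblt
      have hm' : (0:ℤ) < m := by exact_mod_cast hm
      have hpos' : (0:ℤ) < (h:ℤ) := by exact_mod_cast hpos
      have : (n:ℤ) * ((eSteps D i : ℤ) + k) < (m:ℤ) * n := by nlinarith
      have : ((eSteps D i : ℤ) + k) < m := by nlinarith
      omega
    · exact (nSteps_le_n hD.1 i)
    · intro i' hi' hbi'
      have hb' : nSteps D i' = nSteps D i := hbi'
      have := (nSteps_succ_true (by rw [hD.1.1]; omega) ht).1
      have hii' : i' ≤ i := by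
        by_contra hgt
        have : i + 1 ≤ i' := by omega
        have := nSteps_mono (D := D) this
        omega
      have := eSteps_mono (D := D) hii'
      show eSteps D i' < eSteps D i + k.toNat
      omega
    · rw [← hri, rank] at hk
      push_cast [Int.toNat_of_nonneg (by omega : (0:ℤ) ≤ k)]
      linarith
  
end AndersonAux
section ComplementAux

variable {m n : ℕ} {D D' : List Bool} {M : ℤ}

lemma max_facts (hm : 0 < m) (hn : 0 < n) (hco : Nat.Coprime m n) (hD : IsDyck m n D)
    (hM : IsGreatest (↑(rankSet m n D) : Set ℤ) M) :
    M - m ∈ southRanks m n D ∧ ∀ s ∈ southRanks m n D, s ≤ M - m := by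
  have hMR : M ∈ rankSet m n D := hM.1
  have hub : ∀ r ∈ rankSet m n D, r ≤ M := fun r hr => hM.2 hr
  have hmM : (m:ℤ) ≤ M := hub _ (m_mem_rankSet hm hn hD)
  constructor
  · obtain ⟨j, hj, hrj⟩ := mem_rankSet_iff.mp hMR
    have hj0 : j ≠ 0 := by
      intro h0
      rw [h0, rank_zero] at hrj
      omega
    have hj1 : j - 1 < m + n := by omega
    have hlen : j - 1 < D.length := by rw [hD.1.1]; omega
    rcases Bool.eq_false_or_eq_true (D.getD (j-1) false) with ht | hf
    · have hstep := rank_succ_true (m := m) (n := n) hlen ht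
      rw [show j - 1 + 1 = j from by omega, hrj] at hstep
      have hprev : rank m n D (j-1) = M - m := by linarith
      rw [south_char hm hn hco hD]
      constructor
      · exact mem_rankSet_iff.mpr ⟨j-1, hj1, hprev⟩
      · rw [show M - (m:ℤ) + m = M from by ring]; exact hMR
    · exfalso
      have hstep := rank_succ_false (m := m) (n := n) hlen hf
      rw [show j - 1 + 1 = j from by omega, hrj] at hstep
      have hprev : rank m n D (j-1) = M + n := by linarith
      have := hub _ (mem_rankSet_iff.mpr ⟨j-1, hj1, hprev⟩)
      have hn' : (0:ℤ) < n := by exact_mod_cast hn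
      omega
  · intro s hs
    rw [south_char hm hn hco hD] at hs
    have := hub _ hs.2
    omega

lemma south_complement (hm : 0 < m) (hn : 0 < n) (hco : Nat.Coprime m n)
    (hD : IsDyck m n D) (hD' : IsDyck m n D')
    (hM : IsGreatest (↑(rankSet m n D) : Set ℤ) M)
    (hR' : rankSet m n D' = (rankSet m n D).image (fun r => M - r)) :
    southRanks m n D' = (southRanks m n D).image (fun s => M - m - s) := by
  have hmemR' : ∀ x : ℤ, x ∈ rankSet m n D' ↔ M - x ∈ rankSet m n D := by
    intro x
    rw [hR']
    simp only [Finset.mem_image]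
    constructor
    · rintro ⟨r, hr, hrx⟩
      have : M - x = r := by omega
      rw [this]; exact hr
    · intro h; exact ⟨M - x, h, by ring⟩
  ext r
  simp only [Finset.mem_image]
  rw [south_char hm hn hco hD', hmemR', hmemR']
  constructor
  · rintro ⟨h1, h2⟩
    refine ⟨M - r - m, ?_, by ring⟩
    rw [south_char hm hn hco hD]
    exact ⟨by rw [show M - (r + (m:ℤ)) = M - r - m from by ring] at h2; exact h2,
      by rw [show M - r - (m:ℤ) + m = M - r from by ring]; exact h1⟩
  · rintro ⟨s, hs, hsr⟩
    rw [south_char hm hn hco hD] at hs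
    constructor
    · rw [show M - r = s + m from by omega]; exact hs.2
    · rw [show M - (r + m) = s from by omega]; exact hs.1

/-- Characterization of the Anderson set of the rank complement. -/
lemma anderson'_char (hm : 0 < m) (hn : 0 < n) (hco : Nat.Coprime m n)
    (hD : IsDyck m n D) (hD' : IsDyck m n D')
    (hM : IsGreatest (↑(rankSet m n D) : Set ℤ) M)
    (hR' : rankSet m n D' = (rankSet m n D).image (fun r => M - r)) (h : ℕ) :
    h ∈ andersonSet m n D' ↔
      0 < h ∧ ∃ s ∈ southRanks m n D,
        (n : ℤ) ∣ (M - m - n - h) - s ∧ s ≤ M - m - n - h := by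
  rw [anderson_char hm hn hco hD' h]
  have hS' := south_complement hm hn hco hD hD' hM hR'
  constructor
  · rintro ⟨hpos, s', hs', hdvd, hlt⟩
    rw [hS'] at hs'
    obtain ⟨s, hs, hss'⟩ := Finset.mem_image.mp hs'
    refine ⟨hpos, s, hs, ?_, ?_⟩
    · obtain ⟨k, hk⟩ := hdvd
      exact ⟨k - 1, by rw [← hss'] at hk; push_cast; linarith⟩
    · -- s < M - m - h  and  n ∣ (M-m-n-h) - s  give  s ≤ M-m-n-h
      obtain ⟨k, hk⟩ := hdvd
      have hn' : (0:ℤ) < n := by exact_mod_cast hn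
      have h1 : s < M - m - (h:ℤ) := by omega
      have h2 : M - m - n - (h:ℤ) - s = n * (k - 1) := by rw [← hss'] at hk; linarith
      by_contra hgt
      push_neg at hgt
      have hd1 : (n:ℤ) * (k-1) < 0 := by linarith
      have hd2 : -(n:ℤ) < n * (k-1) := by linarith
      have hk1 : k - 1 < 0 := by nlinarith
      have : (n:ℤ) * (k-1) ≤ n * (-1) :=
        mul_le_mul_of_nonneg_left (by omega) (le_of_lt hn')
      linarith
  · rintro ⟨hpos, s, hs, hdvd, hle⟩
    refine ⟨hpos, M - m - s, ?_, ?_, ?_⟩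
    · rw [hS']; exact Finset.mem_image.mpr ⟨s, hs, rfl⟩
    · obtain ⟨k, hk⟩ := hdvd
      exact ⟨k + 1, by push_cast; linarith⟩
    · have hn' : (0:ℤ) < n := by exact_mod_cast hn
      omega

end ComplementAux
section PartitionAux

lemma sorted_getElem {L : List ℕ} (hL : IsPartition L) {i j : ℕ} (hij : i ≤ j)
    (hj : j < L.length) : L[j]'hj ≤ L[i]'(lt_of_le_of_lt hij hj) := by
  rcases Nat.lt_or_ge i j with h | h
  · exact List.pairwise_iff_getElem.mp hL.1 i j _ _ h
  · have : i = j := by omega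
    subst this; exact le_refl _

lemma getD_eq_getElem' {L : List ℕ} {i : ℕ} (hi : i < L.length) : L.getD i 0 = L[i]'hi :=
  List.getD_eq_getElem L 0 hi

lemma hook_zero_eq {L : List ℕ} (hL : IsPartition L) {i : ℕ} (hi : i < L.length) :
    hook L i 0 = L.getD i 0 + (L.length - 1 - i) := by
  rw [hook]
  have hcount : (L.drop (i+1)).countP (fun x => decide (0 < x)) = L.length - (i+1) := by
    rw [List.countP_eq_length.mpr, List.length_drop]
    intro a ha
    simpa using hL.2 a (List.mem_of_mem_drop ha)
  rw [hcount]; omega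

lemma hook_zero_lt {L : List ℕ} (hL : IsPartition L) {i j : ℕ} (hij : i < j)
    (hj : j < L.length) : hook L j 0 < hook L i 0 := by
  rw [hook_zero_eq hL hj, hook_zero_eq hL (by omega)]
  have h1 : L.getD j 0 ≤ L.getD i 0 := by
    rw [getD_eq_getElem' hj, getD_eq_getElem' (show i < L.length by omega)]
    exact sorted_getElem hL hij.le hj
  omega

lemma card_firstColHooks {L : List ℕ} (hL : IsPartition L) :
    (firstColHooks L).card = L.length := by
  rw [firstColHooks, Finset.card_image_of_injOn, Finset.card_range]
  intro i hi j hj hij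
  simp only [Finset.coe_range, Set.mem_Iio] at hi hj
  have hij : hook L i 0 = hook L j 0 := hij
  by_contra hne
  rcases Nat.lt_or_ge i j with h | h
  · have := hook_zero_lt hL h hj; omega
  · have : j < i := by omega
    have := hook_zero_lt hL this hi; omega

lemma firstColHooks_max {L : List ℕ} (hL : IsPartition L) (hne : L ≠ []) :
    (L.getD 0 0 + L.length - 1) ∈ firstColHooks L ∧
      ∀ x ∈ firstColHooks L, x ≤ L.getD 0 0 + L.length - 1 := by
  have hlen : 0 < L.length := List.length_pos_iff.mpr hne
  have hpos : 0 < L.getD 0 0 := by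
    rw [getD_eq_getElem' hlen]; exact hL.2 _ (List.getElem_mem hlen)
  constructor
  · rw [firstColHooks, Finset.mem_image]
    exact ⟨0, Finset.mem_range.mpr hlen, by rw [hook_zero_eq hL hlen]; omega⟩
  · intro x hx
    rw [firstColHooks, Finset.mem_image] at hx
    obtain ⟨i, hi, hix⟩ := hx
    rw [Finset.mem_range] at hi
    rw [← hix, hook_zero_eq hL hi]
    have h1 : L.getD i 0 ≤ L.getD 0 0 := by
      rw [getD_eq_getElem' hi, getD_eq_getElem' hlen]
      exact sorted_getElem hL (Nat.zero_le i) hi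
    omega

/-- The decreasing enumeration of first-column hooks coincides with `orderEmbOfFin`. -/
lemma hooks_fun_eq {K : List ℕ} (hK : IsPartition K) {ℓ : ℕ} (hlen : K.length = ℓ)
    {s : Finset ℕ} (hs : firstColHooks K = s) (hcard : s.card = ℓ) :
    ∀ i : Fin ℓ, hook K (ℓ - 1 - (i : ℕ)) 0 = s.orderEmbOfFin hcard i := by
  have hmono : StrictMono (fun i : Fin ℓ => hook K (ℓ - 1 - (i : ℕ)) 0) := by
    intro i j hij
    have hi := i.2
    have hj := j.2
    have hij' : (i : ℕ) < (j : ℕ) := hij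
    exact hook_zero_lt hK (show ℓ - 1 - (j:ℕ) < ℓ - 1 - (i:ℕ) by omega)
      (show ℓ - 1 - (i:ℕ) < K.length by omega)
  have hmem : ∀ i : Fin ℓ, hook K (ℓ - 1 - (i : ℕ)) 0 ∈ s := by
    intro i
    have hi := i.2
    rw [← hs, firstColHooks, Finset.mem_image]
    exact ⟨ℓ - 1 - (i:ℕ), Finset.mem_range.mpr (by omega), rfl⟩
  have := Finset.orderEmbOfFin_unique hcard hmem hmono
  exact fun i => congrFun this i

/-- A partition is determined by its first-column hook lengths. -/
lemma partition_eq_of_hooks_eq {K₁ K₂ : List ℕ} (h1 : IsPartition K₁) (h2 : IsPartition K₂)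
    (h : firstColHooks K₁ = firstColHooks K₂) : K₁ = K₂ := by
  have hcard : K₁.length = K₂.length := by
    rw [← card_firstColHooks h1, ← card_firstColHooks h2, h]
  set ℓ := K₁.length with hldef
  have hcard1 : (firstColHooks K₁).card = ℓ := card_firstColHooks h1
  have hf1 := hooks_fun_eq h1 rfl (rfl : firstColHooks K₁ = firstColHooks K₁) hcard1
  have hf2 := hooks_fun_eq h2 hcard.symm h.symm hcard1
  have hooks_eq : ∀ i < ℓ, hook K₁ i 0 = hook K₂ i 0 := by
    intro i hi
    have e := (hf1 ⟨ℓ - 1 - i, by omega⟩).trans (hf2 ⟨ℓ - 1 - i, by omega⟩).symm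
    simpa [show ℓ - 1 - (ℓ - 1 - i) = i by omega, show K₁.length - 1 - (ℓ - 1 - i) = i by omega] using e
  have hgetD : ∀ i < ℓ, K₁.getD i 0 = K₂.getD i 0 := by
    intro i hi
    have e1 := hook_zero_eq h1 (show i < K₁.length from hi)
    have e2 := hook_zero_eq h2 (show i < K₂.length by omega)
    rw [hooks_eq i hi] at e1
    rw [← hcard] at e2
    omega
  apply List.ext_getElem hcard
  intro i hi1 hi2
  have := hgetD i hi1
  rwa [getD_eq_getElem' hi1, getD_eq_getElem' hi2] at this

end PartitionAux
section ConjAux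

lemma conjugate_length (L : List ℕ) : (conjugate L).length = L.getD 0 0 := by
  simp [conjugate]

lemma conjugate_getD {L : List ℕ} {j : ℕ} (hj : j < L.getD 0 0) :
    (conjugate L).getD j 0 = L.countP (fun x => decide (j < x)) := by
  have hlen : j < (conjugate L).length := by rw [conjugate_length]; exact hj
  rw [getD_eq_getElem' hlen]
  simp only [conjugate, List.getElem_map, List.getElem_range]

lemma countP_anti (L : List ℕ) {j j' : ℕ} (h : j ≤ j') :
    L.countP (fun x => decide (j' < x)) ≤ L.countP (fun x => decide (j < x)) :=
  List.countP_mono_left (fun x _ hx => by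
    simp only [decide_eq_true_eq] at hx ⊢; omega)

lemma conjugate_isPartition {L : List ℕ} (hL : IsPartition L) :
    IsPartition (conjugate L) := by
  constructor
  · rw [conjugate, List.pairwise_map]
    refine List.Pairwise.imp ?_ (List.pairwise_lt_range (n := _))
    intro a b hab
    exact countP_anti L hab.le
  · intro x hx
    rw [conjugate, List.mem_map] at hx
    obtain ⟨j, hj, hjx⟩ := hx
    rw [List.mem_range] at hj
    have hlen : 0 < L.length := by
      by_contra h
      have : L = [] := by
        cases L with
        | nil => rfl
        | cons a l => simp at h
      rw [this] at hj; simp at hj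
    rw [← hjx]
    rw [List.countP_pos_iff]
    refine ⟨L[0], List.getElem_mem hlen, ?_⟩
    rw [getD_eq_getElem' hlen] at hj
    simpa using hj

lemma countP_ge {L : List ℕ} (hL : IsPartition L) {i j : ℕ} (hi : i < L.length)
    (hij : j < L.getD i 0) : i + 1 ≤ L.countP (fun x => decide (j < x)) := by
  conv_rhs => rw [← List.take_append_drop (i+1) L]
  rw [List.countP_append]
  have htake : (L.take (i+1)).countP (fun x => decide (j < x)) = i + 1 := by
    rw [List.countP_eq_length.mpr, List.length_take]
    · omega
    · intro a ha
      rw [List.mem_iff_getElem] at ha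
      obtain ⟨t, ht, hta⟩ := ha
      have ht' : t < L.length := by
        rw [List.length_take] at ht; omega
      have hti : t ≤ i := by rw [List.length_take] at ht; omega
      have : L[t]'ht' = a := by rw [← hta, List.getElem_take]
      have hle := sorted_getElem hL hti hi
      rw [getD_eq_getElem' hi] at hij
      simp only [decide_eq_true_eq]
      omega
  omega

lemma countP_le' {L : List ℕ} (hL : IsPartition L) {i j : ℕ} (hi : i < L.length)
    (hij : L.getD i 0 ≤ j) : L.countP (fun x => decide (j < x)) ≤ i := by
  conv_lhs => rw [← List.take_append_drop i L]
  rw [List.countP_append]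
  have hdrop : (L.drop i).countP (fun x => decide (j < x)) = 0 := by
    rw [List.countP_eq_zero]
    intro a ha
    rw [List.mem_iff_getElem] at ha
    obtain ⟨t, ht, hta⟩ := ha
    have ht' : i + t < L.length := by rw [List.length_drop] at ht; omega
    have : L[i+t]'ht' = a := by rw [← hta, List.getElem_drop]
    have hle := sorted_getElem hL (show i ≤ i + t by omega) ht'
    rw [getD_eq_getElem' hi] at hij
    simp only [decide_eq_true_eq]
    omega
  have := List.countP_le_length (p := fun x => decide (j < x)) (l := L.take i)
  rw [List.length_take] at this
  omega

/-- The first-column hooks of the conjugate are the complemented-reflected hooks. -/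
lemma conjugate_hooks {L : List ℕ} (hL : IsPartition L) (hne : L ≠ []) :
    firstColHooks (conjugate L) =
      ((Finset.range (L.getD 0 0 + L.length - 1 + 1)) \ firstColHooks L).image
        (fun c => L.getD 0 0 + L.length - 1 - c) := by
  classical
  set ℓ := L.length with hldef
  set lam := L.getD 0 0 with hlamdef
  have hlen : 0 < ℓ := List.length_pos_iff.mpr hne
  have hlam : 0 < lam := by
    rw [hlamdef, getD_eq_getElem' hlen]; exact hL.2 _ (List.getElem_mem hlen)
  set N := lam + ℓ - 1 with hNdef
  set c : ℕ → ℕ := fun j => L.countP (fun x => decide (j < x)) with hcdef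
  have hc_le : ∀ j, c j ≤ ℓ := fun j => List.countP_le_length
  have hc_pos : ∀ j < lam, 1 ≤ c j := by
    intro j hj
    exact countP_ge hL hlen hj
  set G : Finset ℕ := (Finset.range lam).image (fun j => ℓ + j - c j) with hGdef
  have hH := firstColHooks_max hL hne
  have hH_sub : firstColHooks L ⊆ Finset.range (N + 1) := by
    intro x hx
    rw [Finset.mem_range]
    have := hH.2 x hx
    omega
  have hG_sub : G ⊆ Finset.range (N + 1) := by
    intro x hx
    rw [hGdef, Finset.mem_image] at hx
    obtain ⟨j, hj, hjx⟩ := hx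
    rw [Finset.mem_range] at hj
    rw [Finset.mem_range, ← hjx]
    have := hc_pos j hj
    omega
  have hdisj : Disjoint (firstColHooks L) G := by
    rw [Finset.disjoint_left]
    intro x hxH hxG
    rw [firstColHooks, Finset.mem_image] at hxH
    obtain ⟨i, hi, hix⟩ := hxH
    rw [Finset.mem_range] at hi
    rw [hGdef, Finset.mem_image] at hxG
    obtain ⟨j, hj, hjx⟩ := hxG
    rw [Finset.mem_range] at hj
    rw [hook_zero_eq hL hi] at hix
    have hcj_le := hc_le j
    have hcj : c j = L.countP (fun x => decide (j < x)) := rfl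
    have hll : ℓ = L.length := rfl
    rcases Nat.lt_or_ge j (L.getD i 0) with hcase | hcase
    · have := countP_ge hL hi hcase
      omega
    · have := countP_le' hL hi hcase
      omega
  have hcardG : G.card = lam := by
    rw [hGdef, Finset.card_image_of_injOn, Finset.card_range]
    intro a ha b hb hab
    simp only [Finset.coe_range, Set.mem_Iio] at ha hb
    have hab : ℓ + a - c a = ℓ + b - c b := hab
    by_contra hne'
    have hca : c a = L.countP (fun x => decide (a < x)) := rfl
    have hcb : c b = L.countP (fun x => decide (b < x)) := rfl
    rcases Nat.lt_or_ge a b with h | h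
    · have h1 := countP_anti L h.le
      have h2 := hc_le a
      have h3 := hc_le b
      omega
    · have h' : b < a := by omega
      have h1 := countP_anti L h'.le
      have h2 := hc_le a
      have h3 := hc_le b
      omega
  have hcardH : (firstColHooks L).card = ℓ := card_firstColHooks hL
  have hunion : firstColHooks L ∪ G = Finset.range (N + 1) := by
    apply Finset.eq_of_subset_of_card_le (Finset.union_subset hH_sub hG_sub)
    rw [Finset.card_range, Finset.card_union_of_disjoint hdisj, hcardH, hcardG]
    omega
  have hGeq : G = Finset.range (N + 1) \ firstColHooks L := by
    rw [← hunion, Finset.union_sdiff_cancel_left hdisj]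
  rw [← hGeq]
  -- now compute firstColHooks (conjugate L)
  have hconjP := conjugate_isPartition hL
  have hconj_len : (conjugate L).length = lam := conjugate_length L
  rw [firstColHooks, hconj_len, hGdef, Finset.image_image]
  apply Finset.image_congr
  intro j hj
  simp only [Finset.coe_range, Set.mem_Iio] at hj
  show hook (conjugate L) j 0 = N - (ℓ + j - c j)
  rw [hook_zero_eq hconjP (by rw [hconj_len]; exact hj), hconj_len, conjugate_getD hj]
  have h1 := hc_pos j hj
  have h2 := hc_le j
  have hcj : c j = L.countP (fun x => decide (j < x)) := rfl
  omega

end ConjAux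
/-- If `D'` is the rank complement of the `(m,n)`-Dyck path `D`,
then the `(m,n)`-core corresponding to `D'` under Anderson's bijection is the
conjugate of the one corresponding to `D`. -/
theorem rank_complement_conjugate (m n : ℕ) (hm : 0 < m) (hn : 0 < n)
    (hco : Nat.Coprime m n) (D D' : List Bool)
    (hD : IsDyck m n D) (hD' : IsDyck m n D')
    (hcomp : IsRankComplement m n D D')
    (L L' : List ℕ) (hL : IsPartition L) (hL' : IsPartition L')
    (hα : (↑(firstColHooks L) : Set ℕ) = andersonSet m n D)
    (hα' : (↑(firstColHooks L') : Set ℕ) = andersonSet m n D') :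
    L' = conjugate L := by
  classical
  obtain ⟨M, hM, hR'⟩ := hcomp
  have hAmem : ∀ h : ℕ, h ∈ firstColHooks L ↔ h ∈ andersonSet m n D := by
    intro h
    rw [← Set.ext_iff.mp hα h]; exact Iff.rfl
  have hA'mem : ∀ h : ℕ, h ∈ firstColHooks L' ↔ h ∈ andersonSet m n D' := by
    intro h
    rw [← Set.ext_iff.mp hα' h]; exact Iff.rfl
  have hchar := anderson_char hm hn hco hD
  have hchar' := anderson'_char hm hn hco hD hD' hM hR'
  obtain ⟨hSmax, hSub⟩ := max_facts hm hn hco hD hM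
  have hn' : (0:ℤ) < n := by exact_mod_cast hn
  have hm' : (0:ℤ) < m := by exact_mod_cast hm
  have hSnonneg : ∀ s ∈ southRanks m n D, (0:ℤ) ≤ s := by
    intro s hs
    exact rankSet_nonneg hD ((south_char hm hn hco hD).mp hs).1
  have hgap : ∀ (s : ℤ) (h : ℕ), (n:ℤ) ∣ s - h → (h:ℤ) < s → (h:ℤ) ≤ s - n := by
    intro s h hdvd hlt
    obtain ⟨k, hk⟩ := hdvd
    have hk1 : 1 ≤ k := by nlinarith
    have : (n:ℤ) * 1 ≤ n * k := by nlinarith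
    omega
  -- conversion lemma: emptiness of L from emptiness of its Anderson set
  have hempty_of : ∀ (K : List ℕ), IsPartition K → (∀ x : ℕ, x ∉ firstColHooks K) → K = [] := by
    intro K hK hno
    by_contra hne
    have hlen : 0 < K.length := List.length_pos_iff.mpr hne
    exact hno (hook K 0 0) (by
      rw [firstColHooks, Finset.mem_image]
      exact ⟨0, Finset.mem_range.mpr hlen, rfl⟩)
  rcases le_or_gt M ((m:ℤ) + n) with hsmall | hbig
  · -- degenerate case: both Anderson sets empty
    have hAempty : ∀ h : ℕ, h ∉ andersonSet m n D := by
      intro h hmem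
      obtain ⟨hpos, s, hs, hdvd, hlt⟩ := (hchar h).mp hmem
      have h1 := hSub s hs
      have h2 := hgap s h hdvd hlt
      have : (0:ℤ) < h := by exact_mod_cast hpos
      omega
    have hA'empty : ∀ h : ℕ, h ∉ andersonSet m n D' := by
      intro h hmem
      obtain ⟨hpos, s, hs, hdvd, hle⟩ := (hchar' h).mp hmem
      have h1 := hSnonneg s hs
      have : (0:ℤ) < h := by exact_mod_cast hpos
      omega
    have hLnil : L = [] := hempty_of L hL (fun x hx => hAempty x ((hAmem x).mp hx))
    have hL'nil : L' = [] := hempty_of L' hL' (fun x hx => hA'empty x ((hA'mem x).mp hx))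
    rw [hLnil, hL'nil]
    rfl
  · -- main case
    set Nz : ℤ := M - m - n with hNzdef
    have hNzpos : 0 < Nz := by omega
    set N : ℕ := Nz.toNat with hNdef
    have hNcast : (N : ℤ) = Nz := Int.toNat_of_nonneg hNzpos.le
    have hNpos : 0 < N := by omega
    have hNA : N ∈ andersonSet m n D := by
      refine (hchar N).mpr ⟨hNpos, M - m, hSmax, ⟨1, by omega⟩, by omega⟩
    have hAle : ∀ h : ℕ, h ∈ andersonSet m n D → h ≤ N := by
      intro h hmem
      obtain ⟨hpos, s, hs, hdvd, hlt⟩ := (hchar h).mp hmem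
      have h1 := hSub s hs
      have h2 := hgap s h hdvd hlt
      omega
    -- the key reflection property
    have hkey : ∀ h : ℕ, h ∈ andersonSet m n D' ↔
        h ≤ N ∧ 0 < h ∧ (N - h) ∉ andersonSet m n D := by
      intro h
      constructor
      · intro hmem
        obtain ⟨hpos, s, hs, hdvd, hle⟩ := (hchar' h).mp hmem
        have hs0 := hSnonneg s hs
        have hhN : h ≤ N := by omega
        refine ⟨hhN, hpos, ?_⟩
        intro hc
        obtain ⟨hcpos, s₂, hs₂, hdvd₂, hlt₂⟩ := (hchar (N - h)).mp hc
        have hcast : ((N - h : ℕ) : ℤ) = (N:ℤ) - h := by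
          push_cast [Nat.cast_sub hhN]; ring
        have hdvd₃ : (n:ℤ) ∣ s₂ - s := by
          obtain ⟨k1, hk1⟩ := hdvd
          obtain ⟨k2, hk2⟩ := hdvd₂
          refine ⟨k2 + k1, ?_⟩
          rw [hcast] at hk2
          have he1 : Nz - h - s = (M - m - n - h) - s := by rw [hNzdef]
          have he2 : (n:ℤ) * (k2 + k1) = n * k2 + n * k1 := by ring
          omega
        have heq := south_unique hm hn hco hD hs₂ hs hdvd₃
        rw [hcast] at hlt₂
        omega
      · rintro ⟨hhN, hpos, hc⟩
        obtain ⟨s, hs, hdvd⟩ := south_exists_mod hm hn hco hD ((N:ℤ) - h)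
        have hcast : ((N - h : ℕ) : ℤ) = (N:ℤ) - h := by
          push_cast [Nat.cast_sub hhN]; ring
        have hsle : s ≤ (N:ℤ) - h := by
          by_contra hgt
          push_neg at hgt
          rcases Nat.eq_zero_or_pos (N - h) with h0 | hposc
          · -- N = h ; the residue-0 south rank is 0
            have hNh : (N:ℤ) - h = 0 := by omega
            have h0S := zero_mem_southRanks hm hn hco hD
            have : s = 0 := by
              apply south_unique hm hn hco hD hs h0S
              rw [hNh] at hdvd
              simpa using hdvd
            omega
          · apply hc
            refine (hchar (N - h)).mpr ⟨hposc, s, hs, ?_, ?_⟩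
            · rw [hcast]; exact hdvd
            · rw [hcast]; omega
        refine (hchar' h).mpr ⟨hpos, s, hs, ?_, ?_⟩
        · have : Nz - h - s = ((N:ℤ) - h) - s := by rw [hNcast]
          rw [this]
          obtain ⟨k, hk⟩ := hdvd
          refine ⟨-k, ?_⟩
          have he2 : (n:ℤ) * (-k) = -(n * k) := by ring
          omega
        · omega
    -- partition side
    have hNH : N ∈ firstColHooks L := (hAmem N).mpr hNA
    have hLne : L ≠ [] := by
      intro h0
      rw [h0] at hNH
      simp [firstColHooks] at hNH
    obtain ⟨hNLmem, hNLub⟩ := firstColHooks_max hL hLne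
    have hNL : L.getD 0 0 + L.length - 1 = N := by
      have h1 : L.getD 0 0 + L.length - 1 ≤ N := hAle _ ((hAmem _).mp hNLmem)
      have h2 : N ≤ L.getD 0 0 + L.length - 1 := hNLub N hNH
      omega
    apply partition_eq_of_hooks_eq hL' (conjugate_isPartition hL)
    rw [conjugate_hooks hL hLne, hNL]
    ext x
    rw [hA'mem x, hkey x, Finset.mem_image]
    constructor
    · rintro ⟨hxN, hxpos, hxc⟩
      refine ⟨N - x, ?_, by omega⟩
      rw [Finset.mem_sdiff, Finset.mem_range]
      exact ⟨by omega, fun hmem => hxc ((hAmem _).mp hmem)⟩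
    · rintro ⟨c, hc, hcx⟩
      rw [Finset.mem_sdiff, Finset.mem_range] at hc
      have hcN : c ≠ N := fun h => hc.2 (h ▸ hNH)
      have hcA : (N - (N - c)) ∉ andersonSet m n D := by
        rw [show N - (N - c) = c by omega]
        exact fun hmem => hc.2 ((hAmem c).mpr hmem)
      rw [← hcx]
      exact ⟨by omega, by omega, by rw [show N - (N - c) = c by omega] at hcA ⊢; exact hcA⟩
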